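/- Let s ∈ ℕ, d = 2s, and let p₀, …, p_d ∈ ℂ. Define p : ℂ → ℂ by p(z) = Σ_{k=0}^d p_k·z^k·conj(z)^{d−k}, and assume p is real-valued (Im p(z) = 0 for all z ∈ ℂ). Suppose there is δ > 0 such that p(z) ≥ 0 for all z ∈ ℂ with |z| < δ, and suppose the middle coefficient vanishes: p_s = 0. Then p_k = 0 for every k = 0, …, d; in particular p vanishes identically. -/

import Mathlib

open Finset Complex


/-- for a real-valued homogeneous polynomial `p(z) = Σ_k p_k z^k conj(z)^{2s-k}`
of even degree `d = 2s` that is nonnegative near `0`, if the middle coefficient `p_s`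
vanishes then `p` vanishes identically (all coefficients are `0`). -/
theorem boundary_jets_stmt17 (s : ℕ) (pc : ℕ → ℂ)
    (p : ℂ → ℂ)
    (hp : ∀ z : ℂ, p z = ∑ k ∈ Finset.range (2 * s + 1),
      pc k * z ^ k * (starRingEnd ℂ z) ^ (2 * s - k))
    (hreal : ∀ z : ℂ, (p z).im = 0)
    (δ : ℝ) (hδ : 0 < δ)
    (hpos : ∀ z : ℂ, ‖z‖ < δ → 0 ≤ (p z).re)
    (hmid : pc s = 0) :
    ∀ k ≤ 2 * s, pc k = 0 := by
  intro k₀ hk₀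
  set N := 4 * s + 1 with hNdef
  have hNpos : 0 < N := by omega
  have hNC : (N : ℂ) ≠ 0 := Nat.cast_ne_zero.mpr hNpos.ne'
  obtain ⟨ω, hω⟩ : ∃ ω : ℂ, IsPrimitiveRoot ω N :=
    ⟨_, Complex.isPrimitiveRoot_exp N hNpos.ne'⟩
  have hωN : ω ^ N = 1 := hω.pow_eq_one
  have hω0 : ω ≠ 0 := by
    intro h; rw [h] at hωN; simp [zero_pow hNpos.ne'] at hωN
  -- abs ω = 1
  have habs : ‖ω‖ = 1 :=
    Complex.norm_eq_one_of_pow_eq_one hωN hNpos.ne'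
  -- conj of powers of ω
  have hconj : ∀ j : ℕ, (starRingEnd ℂ) (ω ^ j) = ω ^ (j * (N - 1)) := by
    intro j
    have h1 : ω ^ j * ω ^ (j * (N - 1)) = 1 := by
      rw [← pow_add]
      have h4 : N - 1 = 4 * s := by omega
      have : j + j * (N - 1) = N * j := by rw [h4, hNdef]; ring
      rw [this, pow_mul, hωN, one_pow]
    have h2 : ω ^ j * (starRingEnd ℂ) (ω ^ j) = 1 := by
      rw [Complex.mul_conj]
      norm_cast
      rw [Complex.normSq_eq_norm_sq, norm_pow, habs, one_pow, one_pow]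
    exact mul_left_cancel₀ (pow_ne_zero j hω0) (h2.trans h1.symm)
  -- geometric sum over N-th roots
  have hS : ∀ m : ℕ, (∑ j ∈ range N, ω ^ (j * m)) = if N ∣ m then (N : ℂ) else 0 := by
    intro m
    have hrw : ∀ j : ℕ, ω ^ (j * m) = (ω ^ m) ^ j := fun j => by
      rw [← pow_mul, mul_comm]
    simp_rw [hrw]
    by_cases hd : N ∣ m
    · rw [if_pos hd]
      have : ω ^ m = 1 := (hω.pow_eq_one_iff_dvd m).mpr hd
      simp [this]
    · rw [if_neg hd]
      have hx1 : ω ^ m ≠ 1 := fun h => hd ((hω.pow_eq_one_iff_dvd m).mp h)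
      have hgm := geom_sum_mul (ω ^ m) N
      have hxN : (ω ^ m) ^ N = 1 := by
        rw [← pow_mul, mul_comm, pow_mul, hωN, one_pow]
      rw [hxN, sub_self] at hgm
      rcases mul_eq_zero.mp hgm with h | h
      · exact h
      · exact absurd (by linear_combination h) hx1
  -- divisibility characterization
  have harith : ∀ k a : ℕ, k ≤ 2 * s → a ≤ 2 * s →
      (N ∣ k + (N - 1) * (2 * s - k) + (2 * s + (N - 2 * a)) ↔ k = a) := by
    intro k a hk ha
    have hkey : (↑(k + (N - 1) * (2 * s - k) + (2 * s + (N - 2 * a))) : ℤ)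
        = N * (2 * s - k + 1) + (2 * k - 2 * a) := by
      have h1 : (1:ℕ) ≤ N := hNpos
      have h2 : 2 * a ≤ N := by omega
      push_cast [Nat.cast_sub hk, Nat.cast_sub h1, Nat.cast_sub h2]
      ring
    rw [← Int.natCast_dvd_natCast, hkey]
    constructor
    · intro hdvd
      have hdvd2 : (N : ℤ) ∣ (2 * k - 2 * a) := by
        have : (N:ℤ) * (2 * s - k + 1) + (2 * k - 2 * a) - (N:ℤ) * (2 * s - k + 1)
            = 2 * k - 2 * a := by ring
        rw [← this]
        exact dvd_sub hdvd (Dvd.intro _ rfl)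
      by_contra hne
      have hne' : (2 * (k:ℤ) - 2 * a) ≠ 0 := by
        intro h; apply hne; omega
      have := Int.le_of_dvd (b := |2 * (k:ℤ) - 2 * a|) (abs_pos.mpr hne')
        ((dvd_abs _ _).mpr hdvd2)
      have hb : |2 * (k:ℤ) - 2 * a| ≤ 4 * s := by
        rw [abs_le]; omega
      omega
    · rintro rfl
      exact ⟨2 * s - k + 1, by ring⟩
  -- main sum computation
  set t : ℝ := δ / 2 with ht
  have ht0 : (0:ℝ) < t := by positivity
  have htC : ((t:ℂ)) ≠ 0 := by exact_mod_cast ht0.ne'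
  have hzabs : ∀ j : ℕ, ‖(t:ℂ) * ω ^ j‖ < δ := by
    intro j
    rw [norm_mul, norm_pow, habs, one_pow, mul_one, Complex.norm_real, Real.norm_eq_abs,
      abs_of_pos ht0]
    rw [ht]; linarith
  have hsum : ∀ c : ℕ, ∑ j ∈ range N, p ((t:ℂ) * ω ^ j) * ω ^ (j * c)
      = (t:ℂ) ^ (2 * s) * ∑ k ∈ range (2 * s + 1),
          pc k * (if N ∣ (k + (N - 1) * (2 * s - k) + c) then (N : ℂ) else 0) := by
    intro c
    simp_rw [hp, Finset.sum_mul]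
    rw [Finset.sum_comm, Finset.mul_sum]
    refine Finset.sum_congr rfl fun k hk => ?_
    rw [Finset.mem_range] at hk
    have hk' : k ≤ 2 * s := by omega
    rw [← hS (k + (N - 1) * (2 * s - k) + c), Finset.mul_sum, Finset.mul_sum]
    refine Finset.sum_congr rfl fun j _ => ?_
    rw [map_mul, Complex.conj_ofReal, hconj]
    rw [mul_pow, mul_pow, ← pow_mul, ← pow_mul]
    have hexp : j * (N - 1) * (2 * s - k) = j * ((N - 1) * (2 * s - k)) := by ring
    rw [hexp]
    have htt : (t:ℂ) ^ k * (t:ℂ) ^ (2 * s - k) = (t:ℂ) ^ (2 * s) := by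
      rw [← pow_add]; congr 1; omega
    have : ω ^ (j * k) * ω ^ (j * ((N - 1) * (2 * s - k))) * ω ^ (j * c)
        = ω ^ (j * (k + (N - 1) * (2 * s - k) + c)) := by
      rw [← pow_add, ← pow_add]; congr 1; ring
    calc pc k * ((t:ℂ) ^ k * ω ^ (j * k)) *
          ((t:ℂ) ^ (2 * s - k) * ω ^ (j * ((N - 1) * (2 * s - k)))) * ω ^ (j * c)
        = (t:ℂ) ^ k * (t:ℂ) ^ (2 * s - k) * (pc k *
            (ω ^ (j * k) * ω ^ (j * ((N - 1) * (2 * s - k))) * ω ^ (j * c))) := by ring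
      _ = (t:ℂ) ^ (2 * s) * (pc k * ω ^ (j * (k + (N - 1) * (2 * s - k) + c))) := by
          rw [htt, this]
  -- Step 1: with c = 2s + (N - 2s) the inner ifs pick k = s, whose coeff is 0;
  -- but for the positivity step we need c = 0.  Relate c = 0 divisibility to k = s.
  have harith0 : ∀ k : ℕ, k ≤ 2 * s →
      (N ∣ k + (N - 1) * (2 * s - k) ↔ k = s) := by
    intro k hk
    have h := harith k s hk (by omega)
    have hNN : 2 * s + (N - 2 * s) = N := by omega
    rw [hNN] at h
    rw [← Nat.dvd_add_self_right]
    exact h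
  -- Step 1: sum of values is zero
  have h0 : ∑ j ∈ range N, p ((t:ℂ) * ω ^ j) = 0 := by
    have h := hsum 0
    simp only [Nat.mul_zero, pow_zero, mul_one, Nat.add_zero] at h
    rw [h]
    have hz : ∑ k ∈ range (2 * s + 1),
        pc k * (if N ∣ (k + (N - 1) * (2 * s - k)) then (N : ℂ) else 0) = 0 := by
      refine Finset.sum_eq_zero fun k hk => ?_
      rw [Finset.mem_range] at hk
      by_cases hks : k = s
      · subst hks; rw [hmid, zero_mul]
      · rw [if_neg, mul_zero]
        rw [harith0 k (by omega)]
        exact hks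
    rw [hz, mul_zero]
  have hre : ∀ j ∈ range N, (p ((t:ℂ) * ω ^ j)).re = 0 := by
    have hsum_re : ∑ j ∈ range N, (p ((t:ℂ) * ω ^ j)).re = 0 := by
      rw [← Complex.re_sum, h0, Complex.zero_re]
    intro j hj
    exact (Finset.sum_eq_zero_iff_of_nonneg
      (fun j _ => hpos _ (hzabs j))).mp hsum_re j hj
  have hzero : ∀ j ∈ range N, p ((t:ℂ) * ω ^ j) = 0 := by
    intro j hj
    exact Complex.ext (by rw [hre j hj, Complex.zero_re]) (by rw [hreal, Complex.zero_im])
  -- Step 2: isolate coefficient k₀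
  have hfin := hsum (2 * s + (N - 2 * k₀))
  have hL : ∑ j ∈ range N, p ((t:ℂ) * ω ^ j) * ω ^ (j * (2 * s + (N - 2 * k₀))) = 0 :=
    Finset.sum_eq_zero (fun j hj => by rw [hzero j hj, zero_mul])
  rw [hL] at hfin
  have hinner : ∑ k ∈ range (2 * s + 1),
      pc k * (if N ∣ (k + (N - 1) * (2 * s - k) + (2 * s + (N - 2 * k₀))) then (N : ℂ) else 0)
      = pc k₀ * N := by
    have hmem : k₀ ∈ range (2 * s + 1) := Finset.mem_range.mpr (Nat.lt_succ_of_le hk₀)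
    have hothers : ∀ b ∈ range (2 * s + 1), b ≠ k₀ →
        pc b * (if N ∣ (b + (N - 1) * (2 * s - b) + (2 * s + (N - 2 * k₀)))
          then (N : ℂ) else 0) = 0 := by
      intro b hb hbne
      rw [Finset.mem_range] at hb
      rw [if_neg, mul_zero]
      rw [harith b k₀ (by omega) hk₀]
      exact hbne
    rw [Finset.sum_eq_single_of_mem k₀ hmem hothers,
      if_pos ((harith k₀ k₀ hk₀ hk₀).mpr rfl)]
  rw [hinner] at hfin
  have ht2 : ((t:ℂ)) ^ (2 * s) ≠ 0 := pow_ne_zero _ htC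
  have : pc k₀ * N = 0 := by
    rcases mul_eq_zero.mp hfin.symm with h | h
    · exact absurd h ht2
    · exact h
  rcases mul_eq_zero.mp this with h | h
  · exact h
  · exact absurd h hNC
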